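/- arXiv:2001.08453 — 2 statements merged into one kernel-verified Lean document; each statement's English description precedes it below -/
import Mathlib

section
/- If Σ admits a Mal'cev term, i.e. a ternary term m with Σ ⊢ m(x, y, y) ≈ x and Σ ⊢ m(x, x, y) ≈ y, then the free-algebra functor F_Σ weakly preserves kernel pairs: for every surjective map f : X → Y with kernel pair K = {(x, x') ∈ X × X : f(x) = f(x')} and projections π₁, π₂ : K → X, and any p, q ∈ F_Σ(X) with (F_Σ f)(p) = (F_Σ f)(q), there exists w ∈ F_Σ(K) with (F_Σ π₁)(w) = p and (F_Σ π₂)(w) = q. -/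
universe u

/-- A finitary algebraic signature. -/
structure Sig where
  ops : Type
  ar : ops → ℕ

namespace UA

/-- Terms over the signature `S` with variables from `X`. -/
inductive Term (S : Sig) (X : Type) : Type where
  | var : X → Term S X
  | app : (o : S.ops) → (Fin (S.ar o) → Term S X) → Term S X

/-- Simultaneous substitution of terms for variables. -/
def Term.subst {S : Sig} {X Y : Type} (σ : X → Term S Y) : Term S X → Term S Y
  | .var x => σ x
  | .app o ts => .app o fun i => (ts i).subst σ

/-- Renaming (substitution of variables for variables). -/
def Term.rename {S : Sig} {X Y : Type} (φ : X → Y) (t : Term S X) : Term S Y :=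
  t.subst fun x => .var (φ x)

/-- Equational provability from the set `Γ` of axioms (pairs of terms over the
countable variable set `ℕ`), over arbitrary variable sets. -/
inductive Eqv {S : Sig} (Γ : Set (Term S ℕ × Term S ℕ)) :
    {X : Type} → Term S X → Term S X → Prop where
  | axm {X : Type} {l r : Term S ℕ} (h : (l, r) ∈ Γ) (σ : ℕ → Term S X) :
      Eqv Γ (l.subst σ) (r.subst σ)
  | refl {X : Type} (t : Term S X) : Eqv Γ t t
  | symm {X : Type} {t u : Term S X} : Eqv Γ t u → Eqv Γ u t
  | trans {X : Type} {t u v : Term S X} : Eqv Γ t u → Eqv Γ u v → Eqv Γ t v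
  | congr {X : Type} (o : S.ops) {ts us : Fin (S.ar o) → Term S X} :
      (∀ i, Eqv Γ (ts i) (us i)) → Eqv Γ (.app o ts) (.app o us)
  | sbst {X Y : Type} {t u : Term S X} (σ : X → Term S Y) :
      Eqv Γ t u → Eqv Γ (t.subst σ) (u.subst σ)

def termSetoid {S : Sig} (Γ : Set (Term S ℕ × Term S ℕ)) (X : Type) : Setoid (Term S X) :=
  ⟨Eqv Γ, ⟨fun t => .refl t, fun h => h.symm, fun h h' => h.trans h'⟩⟩

/-- The free algebra over the variable set `X` in the variety axiomatized by `Γ`: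
terms modulo `Γ`-provable equality.  This is the object part of the free-algebra
functor `F_Σ`. -/
def FreeAlg {S : Sig} (Γ : Set (Term S ℕ × Term S ℕ)) (X : Type) : Type :=
  Quotient (termSetoid Γ X)

/-- The action of the free-algebra functor `F_Σ` on maps: variable substitution. -/
def FreeAlg.map {S : Sig} {Γ : Set (Term S ℕ × Term S ℕ)} {X Y : Type} (φ : X → Y) :
    FreeAlg Γ X → FreeAlg Γ Y :=
  Quotient.map (Term.rename φ) fun _ _ h => h.sbst _

end UA

namespace UA

variable {S : Sig}

lemma Term.subst_rename {X Y Z : Type} (φ : X → Y) (σ : Y → Term S Z) (t : Term S X) :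
    (t.rename φ).subst σ = t.subst (fun x => σ (φ x)) := by
  induction t with
  | var x => rfl
  | app o ts ih => simp only [Term.rename, Term.subst] at *; exact congrArg _ (funext ih)

lemma Term.rename_subst {X Y Z : Type} (σ : X → Term S Y) (φ : Y → Z) (t : Term S X) :
    (t.subst σ).rename φ = t.subst (fun x => (σ x).rename φ) := by
  induction t with
  | var x => rfl
  | app o ts ih =>
    simp only [Term.rename, Term.subst] at *; exact congrArg _ (funext ih)

lemma Term.rename_rename {X Y Z : Type} (φ : X → Y) (ψ : Y → Z) (t : Term S X) :
    (t.rename φ).rename ψ = t.rename (fun x => ψ (φ x)) :=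
  Term.subst_rename φ _ t

lemma Term.rename_id {X : Type} (t : Term S X) : t.rename (fun x => x) = t := by
  induction t with
  | var x => rfl
  | app o ts ih => simp only [Term.rename, Term.subst] at *; exact congrArg _ (funext ih)

lemma Eqv.subst_congr {Γ : Set (Term S ℕ × Term S ℕ)} {X Y : Type}
    (t : Term S X) {σ τ : X → Term S Y} (h : ∀ x, Eqv Γ (σ x) (τ x)) :
    Eqv Γ (t.subst σ) (t.subst τ) := by
  induction t with
  | var x => exact h x
  | app o ts ih => exact Eqv.congr o ih

/-- If the variety of `Γ` has a Mal'cev term `m` (with `m(x,y,y) ≈ x` and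
`m(x,x,y) ≈ y`), then the free-algebra functor `F_Σ` weakly preserves kernel
pairs: for every surjective `f : X → Y` and `p, q ∈ F_Σ X` with
`(F_Σ f) p = (F_Σ f) q` there is a `w ∈ F_Σ K` over the kernel pair `K` of `f`
projecting to `p` and `q`. -/
theorem malcev_implies_weakly_preserves_kernel_pairs
    (Γ : Set (Term S ℕ × Term S ℕ)) (m : Term S (Fin 3))
    (hm₁ : Eqv Γ (m.rename ![0, 1, 1]) (Term.var 0 : Term S ℕ))
    (hm₂ : Eqv Γ (m.rename ![0, 0, 1]) (Term.var 1 : Term S ℕ))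
    {X Y : Type} (f : X → Y) (hf : Function.Surjective f)
    (p q : FreeAlg Γ X) (h : FreeAlg.map f p = FreeAlg.map f q) :
    ∃ w : FreeAlg Γ {xy : X × X // f xy.1 = f xy.2},
      FreeAlg.map (fun k => k.1.1) w = p ∧ FreeAlg.map (fun k => k.1.2) w = q := by
  classical
  set K := {xy : X × X // f xy.1 = f xy.2}
  let g : Y → X := Function.surjInv hf
  have hg : ∀ y, f (g y) = y := Function.surjInv_eq hf
  obtain ⟨P, rfl⟩ := Quotient.exists_rep p
  obtain ⟨Q, rfl⟩ := Quotient.exists_rep q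
  have hPQ : Eqv Γ (P.rename f) (Q.rename f) := Quotient.exact h
  -- Mal'cev helper lemmas specialized to substituted triples
  have hM1 : ∀ {Z : Type} (a b : Term S Z), Eqv Γ (m.subst ![a, b, b]) a := by
    intro Z a b
    have := hm₁.sbst (fun n => if n = 0 then a else b)
    rw [Term.subst_rename] at this
    have e : (fun x => (if (![0, 1, 1] : Fin 3 → ℕ) x = 0 then a else b)) = ![a, b, b] := by
      funext i; fin_cases i <;> simp
    rw [e] at this
    simpa [Term.subst] using this
  have hM2 : ∀ {Z : Type} (a b : Term S Z), Eqv Γ (m.subst ![a, a, b]) b := by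
    intro Z a b
    have := hm₂.sbst (fun n => if n = 0 then a else b)
    rw [Term.subst_rename] at this
    have e : (fun x => (if (![0, 0, 1] : Fin 3 → ℕ) x = 0 then a else b)) = ![a, a, b] := by
      funext i; fin_cases i <;> simp
    rw [e] at this
    simpa [Term.subst] using this
  -- the three term components over the kernel pair
  let σp : X → K := fun x => ⟨(x, g (f x)), by simp [hg]⟩
  let σr : X → K := fun x => ⟨(g (f x), g (f x)), rfl⟩
  let σq : X → K := fun x => ⟨(g (f x), x), by simp [hg]⟩
  refine ⟨⟦m.subst ![P.rename σp, P.rename σr, Q.rename σq]⟧, ?_, ?_⟩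
  · apply Quotient.sound
    show Eqv Γ ((m.subst _).rename _) P
    rw [Term.rename_subst]
    have e : (fun i => ((![P.rename σp, P.rename σr, Q.rename σq] : Fin 3 → _) i).rename
        (fun (k : K) => k.1.1)) = ![P, P.rename (fun x => g (f x)), Q.rename (fun x => g (f x))] := by
      funext i; fin_cases i <;>
        simp [Term.rename_rename, σp, σr, σq, Term.rename_id]
    rw [e]
    have hQP : Eqv Γ (Q.rename (fun x => g (f x))) (P.rename (fun x => g (f x))) := by
      have := (hPQ.symm).sbst (fun y => Term.var (g y))
      rw [Term.subst_rename, Term.subst_rename] at this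
      exact this
    refine Eqv.trans ?_ (hM1 P (P.rename (fun x => g (f x))))
    apply Eqv.subst_congr m
    intro i; fin_cases i <;> simp
    · exact Eqv.refl _
    · exact Eqv.refl _
    · exact hQP
  · apply Quotient.sound
    show Eqv Γ ((m.subst _).rename _) Q
    rw [Term.rename_subst]
    have e : (fun i => ((![P.rename σp, P.rename σr, Q.rename σq] : Fin 3 → _) i).rename
        (fun (k : K) => k.1.2)) = ![P.rename (fun x => g (f x)), P.rename (fun x => g (f x)), Q] := by
      funext i; fin_cases i <;>
        simp [Term.rename_rename, σp, σr, σq, Term.rename_id]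
    rw [e]
    exact hM2 _ Q

end UA
end

section
/- Suppose the free-algebra functor F_Σ weakly preserves kernel pairs. Then for any ternary terms p, q with Σ ⊢ p(x, x, y) ≈ q(x, y, y), there exists a quaternary term s such that Σ ⊢ p(x, y, z) ≈ s(x, y, z, z) and Σ ⊢ q(x, y, z) ≈ s(x, x, y, z). -/
universe u

namespace UA

variable {S : Sig}

/-- The free-algebra functor `F_Σ` weakly preserves kernel pairs. -/
def WeaklyPreservesKernelPairs (Γ : Set (Term S ℕ × Term S ℕ)) : Prop :=
  ∀ (X Y : Type) (f : X → Y) (p q : FreeAlg Γ X),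
    FreeAlg.map f p = FreeAlg.map f q →
      ∃ w : FreeAlg Γ {xy : X × X // f xy.1 = f xy.2},
        FreeAlg.map (fun k => k.1.1) w = p ∧ FreeAlg.map (fun k => k.1.2) w = q

theorem Term.subst_subst {X Y Z : Type} (σ : X → Term S Y) (τ : Y → Term S Z)
    (t : Term S X) : (t.subst σ).subst τ = t.subst (fun x => (σ x).subst τ) := by
  induction t with
  | var x => rfl
  | app o ts ih =>
    simp only [Term.subst]
    exact congrArg _ (funext fun i => ih i)

abbrev KPX : Type := Fin 3 ⊕ Fin 3

def KPf : KPX → Fin 2 := Sum.elim ![0, 0, 1] ![0, 1, 1]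

def KPa : KPX → Fin 3 := Sum.elim ![0, 1, 2] ![0, 2, 2]

def KPb : KPX → Fin 3 := Sum.elim ![0, 0, 2] ![0, 1, 2]

def s4 : Fin 3 → Fin 3 → Fin 4 := fun a b =>
  if a = 0 then 0 else if a = 1 then 1 else if b = 1 then 2 else 3

def KPσ : {xy : KPX × KPX // KPf xy.1 = KPf xy.2} → Fin 4 :=
  fun k => s4 (KPa k.1.1) (KPb k.1.2)

lemma KPclaim1 : ∀ k : {xy : KPX × KPX // KPf xy.1 = KPf xy.2},
    (![0, 1, 2, 2] : Fin 4 → ℕ) (KPσ k) = (![0, 1, 2] : Fin 3 → ℕ) (KPa k.1.1) := by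
  rintro ⟨⟨u, v⟩, hk⟩
  rcases u with u | u <;> rcases v with v | v <;> fin_cases u <;> fin_cases v <;>
    first | rfl | exact absurd hk (by decide)

lemma KPclaim2 : ∀ k : {xy : KPX × KPX // KPf xy.1 = KPf xy.2},
    (![0, 0, 1, 2] : Fin 4 → ℕ) (KPσ k) = (![0, 1, 2] : Fin 3 → ℕ) (KPb k.1.2) := by
  rintro ⟨⟨u, v⟩, hk⟩
  rcases u with u | u <;> rcases v with v | v <;> fin_cases u <;> fin_cases v <;>
    first | rfl | exact absurd hk (by decide)

/-- Lemma 7: if `F_Σ` weakly preserves kernel pairs, then any ternary terms `p`, `q`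
with `Σ ⊢ p(x,x,y) ≈ q(x,y,y)` admit a quaternary term `s` with
`Σ ⊢ p(x,y,z) ≈ s(x,y,z,z)` and `Σ ⊢ q(x,y,z) ≈ s(x,x,y,z)`. -/
theorem kernel_pairs_give_quaternary_term
    (Γ : Set (Term S ℕ × Term S ℕ)) (hker : WeaklyPreservesKernelPairs Γ)
    (p q : Term S (Fin 3))
    (h : Eqv Γ (p.rename ![0, 0, 1]) (q.rename ![0, 1, 1] : Term S ℕ)) :
    ∃ s : Term S (Fin 4),
      Eqv Γ (p.rename ![0, 1, 2]) (s.rename ![0, 1, 2, 2] : Term S ℕ) ∧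
      Eqv Γ (q.rename ![0, 1, 2]) (s.rename ![0, 0, 1, 2] : Term S ℕ) := by
  have hf : FreeAlg.map KPf (Quotient.mk (termSetoid Γ KPX) (p.rename Sum.inl))
      = FreeAlg.map KPf (Quotient.mk (termSetoid Γ KPX) (q.rename Sum.inr)) := by
    apply Quotient.sound
    have h2 := h.sbst (fun n => Term.var (if n = 0 then (0 : Fin 2) else 1))
    have e1 : (p.rename ![0, 0, 1] : Term S ℕ).subst
        (fun n => Term.var (if n = 0 then (0 : Fin 2) else 1))
        = (p.rename Sum.inl).rename KPf := by
      simp only [Term.rename, Term.subst_subst]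
      congr 1; funext i; fin_cases i <;> rfl
    have e2 : (q.rename ![0, 1, 1] : Term S ℕ).subst
        (fun n => Term.var (if n = 0 then (0 : Fin 2) else 1))
        = (q.rename Sum.inr).rename KPf := by
      simp only [Term.rename, Term.subst_subst]
      congr 1; funext i; fin_cases i <;> rfl
    rw [e1, e2] at h2
    exact h2
  obtain ⟨w, hw1, hw2⟩ := hker KPX (Fin 2) KPf _ _ hf
  obtain ⟨t, rfl⟩ := Quotient.exists_rep w
  refine ⟨t.rename KPσ, ?_, ?_⟩
  · have h1 : Eqv Γ (t.rename fun k => k.1.1) (p.rename Sum.inl) := Quotient.exact hw1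
    have h2 := h1.sbst (fun u => Term.var ((![0, 1, 2] : Fin 3 → ℕ) (KPa u)))
    have e1 : (t.rename fun k => k.1.1).subst
        (fun u => Term.var ((![0, 1, 2] : Fin 3 → ℕ) (KPa u)))
        = (t.rename KPσ).rename ![0, 1, 2, 2] := by
      simp only [Term.rename, Term.subst_subst]
      congr 1; funext k; exact congrArg Term.var (KPclaim1 k).symm
    have e2 : (p.rename Sum.inl).subst
        (fun u => Term.var ((![0, 1, 2] : Fin 3 → ℕ) (KPa u)))
        = p.rename ![0, 1, 2] := by
      simp only [Term.rename, Term.subst_subst]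
      congr 1; funext i; fin_cases i <;> rfl
    rw [e1, e2] at h2
    exact h2.symm
  · have h1 : Eqv Γ (t.rename fun k => k.1.2) (q.rename Sum.inr) := Quotient.exact hw2
    have h2 := h1.sbst (fun u => Term.var ((![0, 1, 2] : Fin 3 → ℕ) (KPb u)))
    have e1 : (t.rename fun k => k.1.2).subst
        (fun u => Term.var ((![0, 1, 2] : Fin 3 → ℕ) (KPb u)))
        = (t.rename KPσ).rename ![0, 0, 1, 2] := by
      simp only [Term.rename, Term.subst_subst]
      congr 1; funext k; exact congrArg Term.var (KPclaim2 k).symm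
    have e2 : (q.rename Sum.inr).subst
        (fun u => Term.var ((![0, 1, 2] : Fin 3 → ℕ) (KPb u)))
        = q.rename ![0, 1, 2] := by
      simp only [Term.rename, Term.subst_subst]
      congr 1; funext i; fin_cases i <;> rfl
    rw [e1, e2] at h2
    exact h2.symm

end UA
end
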